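/- Let G be the k-th power of the cycle on n vertices (each vertex adjacent to the k nearest vertices on each side), so G is d-regular with d = 2k. Suppose d+1 divides n, n ≥ 3(d+1), and the vertices are partitioned into contiguous blocks of c = d+1 consecutive vertices as clusters. Perform cluster randomization with parameter p ∈ (0,1), use full neighborhood exposure, and let the responses satisfy Y_i(z) = Y_i(σ^1_i)·1[z ∈ σ^1_i] with 0 ≤ Y_i(σ^1_i) ≤ Y_M (all control responses equal to 0). Then Var[τ̂(Z)] ≤ Y_M² · (p^{−2} − 1) · (3d + 2) / n. -/

import Mathlib

open Finset
open scoped Classical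

noncomputable section

/-- Probability weight of a coin vector of independent Bernoulli(p) cluster coins. -/
def coinWt (p : ℝ) {J : Type*} [Fintype J] (x : J → Bool) : ℝ :=
  ∏ j, if x j then p else 1 - p

/-- Probability of an event `A` of assignment vectors under cluster randomization. -/
def clusterPr {V : Type*} [Fintype V] {J : Type*} [Fintype J]
    (p : ℝ) (c : V → J) (A : Set (V → Bool)) : ℝ :=
  ∑ x : J → Bool, coinWt p x * (if (fun v => x (c v)) ∈ A then 1 else 0)

/-- The Horvitz–Thompson estimator. -/
def htEst {V : Type*} [Fintype V] (pr : Set (V → Bool) → ℝ)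
    (σ1 σ0 : V → Set (V → Bool)) (Y : V → (V → Bool) → ℝ) (z : V → Bool) : ℝ :=
  (Fintype.card V : ℝ)⁻¹ *
    ∑ i : V, ((if z ∈ σ1 i then Y i z else 0) / pr (σ1 i)
      - (if z ∈ σ0 i then Y i z else 0) / pr (σ0 i))

/-- Variance of the Horvitz–Thompson estimator under cluster randomization. -/
def clusterVar {V : Type*} [Fintype V] {J : Type*} [Fintype J]
    (p : ℝ) (c : V → J) (σ1 σ0 : V → Set (V → Bool)) (Y : V → (V → Bool) → ℝ) : ℝ :=
  (∑ x : J → Bool, coinWt p x *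
      (htEst (clusterPr p c) σ1 σ0 Y (fun v => x (c v))) ^ 2)
  - (∑ x : J → Bool, coinWt p x *
      htEst (clusterPr p c) σ1 σ0 Y (fun v => x (c v))) ^ 2

/-- Full neighborhood exposure to condition `b`. -/
def fullExp {V : Type*} [Fintype V] (G : SimpleGraph V) (b : Bool) (v : V) :
    Set (V → Bool) :=
  {z | z v = b ∧ ∀ u ∈ G.neighborFinset v, z u = b}

/-- The k-th power of the cycle on n vertices; `cycPow n 1` is the cycle itself. -/
def cycPow (n k : ℕ) : SimpleGraph (Fin n) where
  Adj i j := i ≠ j ∧ ∃ t, 1 ≤ t ∧ t ≤ k ∧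
    ((i.val + t) % n = j.val ∨ (j.val + t) % n = i.val)
  symm := by
    constructor
    rintro i j ⟨hne, t, h1, h2, h⟩
    exact ⟨hne.symm, t, h1, h2, h.symm⟩
  loopless := by constructor; rintro i ⟨hne, -⟩; exact hne rfl


-- Auxiliary lemmas --

lemma sum_pi_bool {J : Type*} [Fintype J] [DecidableEq J] (g : J → Bool → ℝ) :
    ∑ x : J → Bool, ∏ j, g j (x j) = ∏ j, (g j true + g j false) := by
  have h : ∀ j, g j true + g j false = ∑ b : Bool, g j b := by
    intro j; simp [Fintype.sum_bool]
  simp_rw [h]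
  rw [Finset.prod_univ_sum]
  apply Finset.sum_congr
  · ext y; simp [Fintype.mem_piFinset]
  · intros; rfl

def indc {J : Type*} (S : Finset J) (x : J → Bool) : ℝ :=
  if ∀ j ∈ S, x j = true then 1 else 0

lemma indc_mul {J : Type*} [DecidableEq J] (S T : Finset J) (x : J → Bool) :
    indc S x * indc T x = indc (S ∪ T) x := by
  simp only [indc, Finset.forall_mem_union]
  split_ifs <;> simp_all

lemma indc_eq_prod {J : Type*} [Fintype J] (S : Finset J) (x : J → Bool) :
    indc S x = ∏ j ∈ S, (if x j then (1:ℝ) else 0) := by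
  by_cases h : ∀ j ∈ S, x j = true
  · rw [indc, if_pos h, Finset.prod_eq_one]
    intro j hj; simp [h j hj]
  · push_neg at h
    obtain ⟨j, hj, hxj⟩ := h
    rw [indc, if_neg, Finset.prod_eq_zero hj]
    · simp [hxj]
    · push_neg; exact ⟨j, hj, hxj⟩

lemma exp_indc {J : Type*} [Fintype J] [DecidableEq J] (p : ℝ) (S : Finset J) :
    ∑ x : J → Bool, coinWt p x * indc S x = p ^ S.card := by
  have h1 : ∀ x : J → Bool, coinWt p x * indc S x
      = ∏ j, ((if x j then p else 1 - p) * (if j ∈ S then (if x j then (1:ℝ) else 0) else 1)) := by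
    intro x
    rw [Finset.prod_mul_distrib, coinWt, indc_eq_prod]
    congr 1
    rw [Finset.prod_ite_mem, Finset.univ_inter]
  simp_rw [h1]
  rw [sum_pi_bool (fun j b => (if b then p else 1 - p) * (if j ∈ S then (if b then (1:ℝ) else 0) else 1))]
  have h2 : ∀ j : J, ((if (true:Bool) then p else 1 - p) * (if j ∈ S then (if (true:Bool) then (1:ℝ) else 0) else 1))
      + ((if (false:Bool) then p else 1 - p) * (if j ∈ S then (if (false:Bool) then (1:ℝ) else 0) else 1))
      = if j ∈ S then p else 1 := by
    intro j; by_cases hj : j ∈ S <;> simp [hj]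
  trans (∏ j, if j ∈ S then p else (1:ℝ))
  · exact Finset.prod_congr rfl fun j _ => h2 j
  · rw [Finset.prod_ite_mem, Finset.univ_inter, Finset.prod_const]

lemma var_expand {X I : Type*} [Fintype X] [Fintype I] (w : X → ℝ) (g : I → X → ℝ) :
    (∑ x, w x * (∑ i, g i x)^2) - (∑ x, w x * ∑ i, g i x)^2
      = ∑ i, ∑ j, ((∑ x, w x * (g i x * g j x))
          - (∑ x, w x * g i x) * (∑ x, w x * g j x)) := by
  have e1 : (∑ x, w x * (∑ i, g i x)^2) = ∑ i, ∑ j, ∑ x, w x * (g i x * g j x) := by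
    have : ∀ x, w x * (∑ i, g i x)^2 = ∑ i, ∑ j, w x * (g i x * g j x) := by
      intro x
      rw [sq, Finset.sum_mul_sum]
      rw [Finset.mul_sum]
      exact Finset.sum_congr rfl fun i _ => by rw [Finset.mul_sum]
    simp_rw [this]
    rw [Finset.sum_comm]
    exact Finset.sum_congr rfl fun i _ => Finset.sum_comm
  have e2 : (∑ x, w x * ∑ i, g i x) = ∑ i, ∑ x, w x * g i x := by
    simp_rw [Finset.mul_sum]
    exact Finset.sum_comm
  rw [e1, e2, sq, Finset.sum_mul_sum, ← Finset.sum_sub_distrib]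
  exact Finset.sum_congr rfl fun i _ => by rw [← Finset.sum_sub_distrib]

lemma cycPow_adj {n k : ℕ} {i j : Fin n} :
    (cycPow n k).Adj i j ↔ i ≠ j ∧ ∃ t, 1 ≤ t ∧ t ≤ k ∧
      ((i.val + t) % n = j.val ∨ (j.val + t) % n = i.val) := Iff.rfl

lemma cycPow_param {n k d : ℕ} (hd : d = 2 * k) (hkn : k ≤ n) {i v : Fin n}
    (hv : v ∈ insert i ((cycPow n k).neighborFinset i)) :
    ∃ s ≤ d, v.val = (i.val + (n - k) + s) % n := by
  rcases Finset.mem_insert.mp hv with h | h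
  · refine ⟨k, by omega, ?_⟩
    subst h
    rw [show v.val + (n - k) + k = v.val + n by omega, Nat.add_mod_right,
      Nat.mod_eq_of_lt v.isLt]
  · rw [SimpleGraph.mem_neighborFinset, cycPow_adj] at h
    obtain ⟨-, t, ht1, ht2, hor | hor⟩ := h
    · refine ⟨k + t, by omega, ?_⟩
      rw [show i.val + (n - k) + (k + t) = i.val + t + n by omega, Nat.add_mod_right, hor]
    · refine ⟨k - t, by omega, ?_⟩
      rw [← hor, add_assoc, Nat.mod_add_mod,
        show v.val + t + ((n - k) + (k - t)) = v.val + n by omega,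
        Nat.add_mod_right, Nat.mod_eq_of_lt v.isLt]

lemma div_claim {n d m w s : ℕ} (hm : n = (d + 1) * m) (hw : w < n) (hs : s ≤ d)
    (hdn : d < n) :
    (w + s) % n / (d + 1) = w / (d + 1) ∨
      (w + s) % n / (d + 1) = (w / (d + 1) + 1) % m := by
  have hd0 : 0 < d + 1 := Nat.succ_pos d
  have hm0 : 0 < m := by
    rcases Nat.eq_zero_or_pos m with h | h
    · subst h; simp at hm; omega
    · exact h
  have hqr := Nat.div_add_mod w (d + 1)
  have hr0 : w % (d + 1) < d + 1 := Nat.mod_lt _ hd0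
  by_cases hc : w + s < n
  · rw [Nat.mod_eq_of_lt hc]
    have hws : w + s = (d + 1) * (w / (d + 1)) + (w % (d + 1) + s) := by
      rw [← Nat.add_assoc, hqr]
    rw [hws, Nat.mul_add_div hd0]
    by_cases hc2 : w % (d + 1) + s < d + 1
    · left; rw [Nat.div_eq_of_lt hc2]; omega
    · right
      have h1 : (w % (d + 1) + s) / (d + 1) = 1 :=
        Nat.div_eq_of_lt_le (by omega) (by omega)
      rw [h1]
      have h2 : w / (d + 1) + (w % (d + 1) + s) / (d + 1) < m := by
        rw [← Nat.mul_add_div hd0, ← hws]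
        exact (Nat.div_lt_iff_lt_mul hd0).mpr (by rw [mul_comm, ← hm]; exact hc)
      rw [h1] at h2
      rw [Nat.mod_eq_of_lt h2]
  · push_neg at hc
    have hv : (w + s) % n = w + s - n := by
      rw [Nat.mod_eq_sub_mod hc, Nat.mod_eq_of_lt (by omega)]
    rw [hv, Nat.div_eq_of_lt (by omega)]
    right
    have hub : w / (d + 1) < m :=
      (Nat.div_lt_iff_lt_mul hd0).mpr (by rw [mul_comm, ← hm]; exact hw)
    have hlb : m - 1 ≤ w / (d + 1) := by
      rw [Nat.le_div_iff_mul_le hd0]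
      have : (m - 1) * (d + 1) = m * (d + 1) - (d + 1) := by
        rw [Nat.sub_mul, one_mul]
      rw [this, mul_comm, ← hm]
      omega
    have : w / (d + 1) + 1 = m := by omega
    rw [this, Nat.mod_self]

lemma key_congr {n k d m : ℕ} (hd : d = 2 * k) (hm : n = (d + 1) * m)
    (hn : 3 * (d + 1) ≤ n) (i i' v v' s s' : ℕ) (hi' : i' < n)
    (hs : s ≤ d) (hs' : s' ≤ d)
    (hv : v = (i + (n - k) + s) % n) (hv' : v' = (i' + (n - k) + s') % n)
    (hdiv : v / (d + 1) = v' / (d + 1)) :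
    ∃ r < 3 * d + 2,
      i' = ((i + (n - k)) % n - (i + (n - k)) % n % (d + 1) + (n - k) + r) % n := by
  have hn0 : 0 < n := by omega
  have hkn : k ≤ n := by omega
  have hd0 : 0 < d + 1 := Nat.succ_pos d
  set w := (i + (n - k)) % n with hw
  set r0 := w % (d + 1) with hr0
  set a := w - r0 with ha
  set ρ := v % (d + 1) with hρ
  set e := v' % (d + 1) with he
  have har : a + r0 = w := Nat.sub_add_cancel (Nat.mod_le _ _)
  have hed : e < d + 1 := Nat.mod_lt _ hd0
  have hr0d : r0 < d + 1 := Nat.mod_lt _ hd0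
  have hkey : v' + ρ = v + e := by
    have h1 := Nat.div_add_mod v (d + 1)
    have h2 := Nat.div_add_mod v' (d + 1)
    rw [hdiv] at h1
    omega
  have hdvd : (d + 1) ∣ n := ⟨m, hm⟩
  have hρval : ρ = r0 + s ∨ ρ + (d + 1) = r0 + s := by
    have m1 : (w + s) % (d + 1) = (i + (n - k) + s) % (d + 1) :=
      ((Nat.mod_modEq (i + (n - k)) n).of_dvd hdvd).add_right s
    have m2 : ρ = (i + (n - k) + s) % (d + 1) := by
      rw [hρ, hv]; exact Nat.mod_mod_of_dvd _ hdvd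
    have h3 : ρ = (w + s) % (d + 1) := m2.trans m1.symm
    have h4 : (w + s) % (d + 1) = (r0 + s) % (d + 1) := by
      conv_lhs => rw [← Nat.div_add_mod w (d + 1)]
      rw [Nat.add_assoc, Nat.mul_add_mod]
    by_cases h5 : r0 + s < d + 1
    · left; rw [h3, h4, Nat.mod_eq_of_lt h5]
    · right
      have h6 : (r0 + s) % (d + 1) = r0 + s - (d + 1) := by
        rw [Nat.mod_eq_sub_mod (by omega), Nat.mod_eq_of_lt (by omega)]
      rw [h3, h4, h6]; omega
  have hρle : ρ ≤ r0 + s := by omega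
  refine ⟨r0 + s - ρ + e + (d - s'), by omega, ?_⟩
  have castmod : ∀ b : ℕ, ((b % n : ℕ) : ZMod n) = (b : ZMod n) := fun b =>
    ZMod.natCast_mod b n
  have zw : ((w : ℕ) : ZMod n) = ((i + (n - k) : ℕ) : ZMod n) := by
    rw [hw]; exact castmod _
  have zv : ((v : ℕ) : ZMod n) = ((i + (n - k) + s : ℕ) : ZMod n) := by
    rw [hv]; exact castmod _
  have zv' : ((v' : ℕ) : ZMod n) = ((i' + (n - k) + s' : ℕ) : ZMod n) := by
    rw [hv']; exact castmod _
  have zkey : ((v' : ℕ) : ZMod n) + (ρ : ZMod n) = (v : ZMod n) + (e : ZMod n) := by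
    exact_mod_cast congrArg (Nat.cast : ℕ → ZMod n) hkey
  have zha : ((a : ℕ) : ZMod n) + (r0 : ZMod n) = (w : ZMod n) := by
    exact_mod_cast congrArg (Nat.cast : ℕ → ZMod n) har
  have zd : ((d : ℕ) : ZMod n) = 2 * (k : ZMod n) := by
    exact_mod_cast congrArg (Nat.cast : ℕ → ZMod n) hd
  have hcongr : ((i' : ℕ) : ZMod n)
      = ((a + (n - k) + (r0 + s - ρ + e + (d - s')) : ℕ) : ZMod n) := by
    push_cast [Nat.cast_sub hkn, Nat.cast_sub hρle, Nat.cast_sub hs',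
      ZMod.natCast_self] at zw zv zv' zkey zha zd ⊢
    linear_combination -zv' + zkey + zv - zha - zw - zd
  have hmodeq : i' ≡ a + (n - k) + (r0 + s - ρ + e + (d - s')) [MOD n] :=
    (ZMod.natCast_eq_natCast_iff _ _ _).mp hcongr
  calc i' = i' % n := (Nat.mod_eq_of_lt hi').symm
    _ = _ := hmodeq

---- GENERIC BOUND ----

set_option maxHeartbeats 1000000 in
lemma main_bound {V J : Type*} [Fintype V] [Fintype J] [Nonempty V]
    (p : ℝ) (hp0 : 0 < p) (hp1 : p < 1) (c : V → J)
    (σ1 σ0 : V → Set (V → Bool)) (Y : V → (V → Bool) → ℝ)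
    (Y1 : V → ℝ) (YM : ℝ) (hY1 : ∀ i, Y1 i ∈ Set.Icc (0:ℝ) YM)
    (S : V → Finset J)
    (hmem1 : ∀ (i : V) (x : J → Bool),
      ((fun v => x (c v)) ∈ σ1 i) ↔ ∀ j ∈ S i, x j = true)
    (hY : ∀ i z, Y i z = Y1 i * (if z ∈ σ1 i then 1 else 0))
    (hdisj01 : ∀ i z, z ∈ σ0 i → z ∉ σ1 i)
    (hS2 : ∀ i, (S i).card ≤ 2)
    (K : ℕ)
    (hcount : ∀ i, ∃ T : Finset V, T.card ≤ K ∧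
      ∀ i', ¬ Disjoint (S i) (S i') → i' ∈ T) :
    clusterVar p c σ1 σ0 Y ≤ YM ^ 2 * ((p ^ 2)⁻¹ - 1) * K / (Fintype.card V) := by
  set N := (Fintype.card V : ℝ) with hN
  have hN0 : 0 < N := by
    rw [hN]; exact_mod_cast Fintype.card_pos
  have hNne : N ≠ 0 := hN0.ne'
  -- probability of exposure
  have hpr1 : ∀ i, clusterPr p c (σ1 i) = p ^ (S i).card := by
    intro i
    rw [clusterPr, ← exp_indc p (S i)]
    refine Finset.sum_congr rfl fun x _ => ?_
    congr 1
    rw [indc]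
    by_cases h : (fun v => x (c v)) ∈ σ1 i
    · rw [if_pos h, if_pos ((hmem1 i x).mp h)]
    · rw [if_neg h, if_neg (fun hh => h ((hmem1 i x).mpr hh))]
  -- control term vanishes
  have hzero : ∀ (i : V) (z : V → Bool),
      (if z ∈ σ0 i then Y i z else 0) = 0 := by
    intro i z
    by_cases h : z ∈ σ0 i
    · rw [if_pos h, hY, if_neg (hdisj01 i z h), mul_zero]
    · rw [if_neg h]
  set g : V → (J → Bool) → ℝ :=
    fun i x => N⁻¹ * (Y1 i / p ^ (S i).card * indc (S i) x) with hgdef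
  -- the estimator formula
  have hht : ∀ x : J → Bool,
      htEst (clusterPr p c) σ1 σ0 Y (fun v => x (c v)) = ∑ i, g i x := by
    intro x
    rw [htEst, Finset.mul_sum]
    refine Finset.sum_congr rfl fun i _ => ?_
    rw [hzero i, zero_div, sub_zero, hpr1 i]
    have h1 : (if (fun v => x (c v)) ∈ σ1 i then Y i (fun v => x (c v)) else 0)
        = Y1 i * indc (S i) x := by
      by_cases h : (fun v => x (c v)) ∈ σ1 i
      · rw [if_pos h, hY, indc, if_pos ((hmem1 i x).mp h), if_pos h]
      · rw [if_neg h, indc, if_neg (fun hh => h ((hmem1 i x).mpr hh)), mul_zero]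
    rw [h1, hgdef, ← hN]
    rw [mul_div_right_comm]
  -- expectation computations
  have hei : ∀ i, (∑ x : J → Bool, coinWt p x * g i x)
      = N⁻¹ * (Y1 i / p ^ (S i).card) * p ^ (S i).card := by
    intro i
    calc (∑ x : J → Bool, coinWt p x * g i x)
        = N⁻¹ * (Y1 i / p ^ (S i).card) * ∑ x : J → Bool, coinWt p x * indc (S i) x := by
          rw [Finset.mul_sum]
          exact Finset.sum_congr rfl fun x _ => by rw [hgdef]; ring
      _ = _ := by rw [exp_indc]
  have heij : ∀ i j, (∑ x : J → Bool, coinWt p x * (g i x * g j x))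
      = (N⁻¹ * (Y1 i / p ^ (S i).card)) * (N⁻¹ * (Y1 j / p ^ (S j).card))
          * p ^ (S i ∪ S j).card := by
    intro i j
    calc (∑ x : J → Bool, coinWt p x * (g i x * g j x))
        = (N⁻¹ * (Y1 i / p ^ (S i).card)) * (N⁻¹ * (Y1 j / p ^ (S j).card))
            * ∑ x : J → Bool, coinWt p x * indc (S i ∪ S j) x := by
          rw [Finset.mul_sum]
          refine Finset.sum_congr rfl fun x _ => ?_
          rw [hgdef]
          simp only []
          rw [← indc_mul]
          ring
      _ = _ := by rw [exp_indc]
  -- covariance bound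
  have hcov : ∀ i j : V,
      (∑ x : J → Bool, coinWt p x * (g i x * g j x))
        - (∑ x : J → Bool, coinWt p x * g i x) * (∑ x : J → Bool, coinWt p x * g j x)
      ≤ if Disjoint (S i) (S j) then 0
          else (N⁻¹)^2 * (YM ^ 2 * ((p ^ 2)⁻¹ - 1)) := by
    intro i j
    rw [heij, hei, hei]
    have hpci : (0:ℝ) < p ^ (S i).card := pow_pos hp0 _
    have hpcj : (0:ℝ) < p ^ (S j).card := pow_pos hp0 _
    by_cases hdisj : Disjoint (S i) (S j)
    · rw [if_pos hdisj, Finset.card_union_of_disjoint hdisj, pow_add]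
      apply le_of_eq
      ring
    · rw [if_neg hdisj]
      have hu := Finset.card_union_add_card_inter (S i) (S j)
      set t := ((S i) ∩ (S j)).card with htdef
      have ht2 : t ≤ 2 :=
        le_trans (Finset.card_le_card (Finset.inter_subset_left)) (hS2 i)
      have hpt : (0:ℝ) < p ^ t := pow_pos hp0 _
      have hpu' : p ^ (S i ∪ S j).card
          = p ^ (S i).card * p ^ (S j).card * (p ^ t)⁻¹ := by
        have hpu : p ^ (S i ∪ S j).card * p ^ t = p ^ (S i).card * p ^ (S j).card := by
          rw [← pow_add, ← pow_add, hu]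
        field_simp
        linarith [hpu]
      have hsplit :
          (N⁻¹ * (Y1 i / p ^ (S i).card)) * (N⁻¹ * (Y1 j / p ^ (S j).card))
              * p ^ (S i ∪ S j).card
            - (N⁻¹ * (Y1 i / p ^ (S i).card) * p ^ (S i).card)
              * (N⁻¹ * (Y1 j / p ^ (S j).card) * p ^ (S j).card)
          = (N⁻¹)^2 * (Y1 i * Y1 j * ((p ^ t)⁻¹ - 1)) := by
        rw [hpu']
        field_simp
      rw [hsplit]
      have hfac : Y1 i * Y1 j * ((p ^ t)⁻¹ - 1) ≤ YM ^ 2 * ((p ^ 2)⁻¹ - 1) := by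
        have h1 : p ^ 2 ≤ p ^ t := pow_le_pow_of_le_one hp0.le hp1.le ht2
        have h2 : (p ^ t)⁻¹ ≤ (p ^ 2)⁻¹ := by
          apply inv_anti₀ (pow_pos hp0 2) h1
        have h3 : (1:ℝ) ≤ (p ^ t)⁻¹ :=
          (one_le_inv_iff₀).mpr ⟨hpt, pow_le_one₀ hp0.le hp1.le⟩
        have h4 := (hY1 i).1
        have h5 := (hY1 i).2
        have h6 := (hY1 j).1
        have h7 := (hY1 j).2
        have hY2 : Y1 i * Y1 j ≤ YM ^ 2 := by nlinarith
        calc Y1 i * Y1 j * ((p ^ t)⁻¹ - 1)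
            ≤ YM ^ 2 * ((p ^ t)⁻¹ - 1) :=
              mul_le_mul_of_nonneg_right hY2 (by linarith)
          _ ≤ YM ^ 2 * ((p ^ 2)⁻¹ - 1) := by
              apply mul_le_mul_of_nonneg_left (by linarith) (by positivity)
      have hn2 : (0:ℝ) ≤ (N⁻¹)^2 := by positivity
      exact mul_le_mul_of_nonneg_left hfac hn2
  -- assemble
  have hvar : clusterVar p c σ1 σ0 Y
      = ∑ i, ∑ j, ((∑ x : J → Bool, coinWt p x * (g i x * g j x))
          - (∑ x : J → Bool, coinWt p x * g i x)
            * (∑ x : J → Bool, coinWt p x * g j x)) := by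
    rw [clusterVar]
    simp_rw [hht]
    exact var_expand (coinWt p) g
  rw [hvar]
  have hB0 : 0 ≤ YM ^ 2 * ((p ^ 2)⁻¹ - 1) := by
    have h1 : p ^ 2 ≤ 1 := pow_le_one₀ hp0.le hp1.le
    have h2 : 0 < p ^ 2 := pow_pos hp0 2
    have h3 : (1:ℝ) ≤ (p ^ 2)⁻¹ := (one_le_inv_iff₀).mpr ⟨h2, h1⟩
    have h4 := sub_nonneg.mpr h3
    positivity
  have hstep : ∑ i, ∑ j, ((∑ x : J → Bool, coinWt p x * (g i x * g j x))
        - (∑ x : J → Bool, coinWt p x * g i x)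
          * (∑ x : J → Bool, coinWt p x * g j x))
      ≤ ∑ _i : V, ((K:ℝ) * ((N⁻¹)^2 * (YM ^ 2 * ((p ^ 2)⁻¹ - 1)))) := by
    refine Finset.sum_le_sum fun i _ => ?_
    calc ∑ j, ((∑ x : J → Bool, coinWt p x * (g i x * g j x))
          - (∑ x : J → Bool, coinWt p x * g i x)
            * (∑ x : J → Bool, coinWt p x * g j x))
        ≤ ∑ j : V, (if Disjoint (S i) (S j) then 0
            else (N⁻¹)^2 * (YM ^ 2 * ((p ^ 2)⁻¹ - 1))) :=
          Finset.sum_le_sum fun j _ => hcov i j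
      _ = ((Finset.univ.filter fun j : V => ¬ Disjoint (S i) (S j)).card : ℝ)
            * ((N⁻¹)^2 * (YM ^ 2 * ((p ^ 2)⁻¹ - 1))) := by
          rw [Finset.sum_ite, Finset.sum_const, Finset.sum_const, smul_zero, zero_add,
            nsmul_eq_mul]
      _ ≤ (K:ℝ) * ((N⁻¹)^2 * (YM ^ 2 * ((p ^ 2)⁻¹ - 1))) := by
          apply mul_le_mul_of_nonneg_right _ (by positivity)
          obtain ⟨T, hTc, hT⟩ := hcount i
          have hsubT : (Finset.univ.filter fun j : V => ¬ Disjoint (S i) (S j)) ⊆ T :=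
            fun j hj => hT j (Finset.mem_filter.mp hj).2
          have := le_trans (Finset.card_le_card hsubT) hTc
          exact_mod_cast this
  refine le_trans hstep ?_
  rw [Finset.sum_const, Finset.card_univ, nsmul_eq_mul, ← hN]
  apply le_of_eq
  field_simp

set_option maxHeartbeats 1000000 in
/-- **Linear variance bound on powers of the cycle.**
Let `G` be the `k`-th power of the cycle on `n` vertices, which is `d`-regular with
`d = 2k`.  Suppose `d+1` divides `n` (say `n = (d+1)·m`), `n ≥ 3(d+1)`, and the
vertices are partitioned into contiguous blocks of `d+1` consecutive vertices
(the cluster map `cm` sends `v` to block `⌊v/(d+1)⌋`).  Under cluster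
randomization with parameter `p ∈ (0,1)`, full neighborhood exposure, and
responses `Y i z = Y₁ i · 1[z ∈ σ¹_i]` with `0 ≤ Y₁ i ≤ Y_M` (control responses
zero), the variance of the Horvitz–Thompson estimator is at most
`Y_M²·(p⁻² − 1)·(3d+2)/n`. -/
theorem statement11 (n k d : ℕ) (hd : d = 2 * k)
    (m : ℕ) (hm : n = (d + 1) * m) (hn : 3 * (d + 1) ≤ n)
    (p : ℝ) (hp : p ∈ Set.Ioo (0:ℝ) 1)
    (cm : Fin n → Fin m) (hcm : ∀ v : Fin n, (cm v).val = v.val / (d + 1))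
    (YM : ℝ) (Y1 : Fin n → ℝ) (hY1 : ∀ i, Y1 i ∈ Set.Icc (0:ℝ) YM) :
    clusterVar p cm
        (fullExp (cycPow n k) true) (fullExp (cycPow n k) false)
        (fun i z => Y1 i * (if z ∈ fullExp (cycPow n k) true i then 1 else 0))
      ≤ YM ^ 2 * ((p ^ 2)⁻¹ - 1) * (3 * (d : ℝ) + 2) / (n : ℝ) := by
  obtain ⟨hp0, hp1⟩ := hp
  have hn0 : 0 < n := by omega
  have hkn : k ≤ n := by omega
  have hm0 : 0 < m := by
    rcases Nat.eq_zero_or_pos m with h | h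
    · subst h; simp at hm; omega
    · exact h
  have hd0 : 0 < d + 1 := Nat.succ_pos d
  haveI : Nonempty (Fin n) := ⟨⟨0, hn0⟩⟩
  have hfinal := main_bound p hp0 hp1 cm
      (fullExp (cycPow n k) true) (fullExp (cycPow n k) false)
      (fun i z => Y1 i * (if z ∈ fullExp (cycPow n k) true i then 1 else 0))
      Y1 YM hY1
      (fun i => (insert i ((cycPow n k).neighborFinset i)).image cm)
      (by -- hmem1
        intro i x
        constructor
        · rintro ⟨h0, h1⟩ j hj
          obtain ⟨v, hv, rfl⟩ := Finset.mem_image.mp hj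
          rcases Finset.mem_insert.mp hv with rfl | hv'
          · exact h0
          · exact h1 v hv'
        · intro h
          exact ⟨h _ (Finset.mem_image_of_mem cm (Finset.mem_insert_self i _)),
            fun u hu => h _ (Finset.mem_image_of_mem cm (Finset.mem_insert_of_mem hu))⟩)
      (fun i z => rfl)
      (by -- hdisj01
        intro i z hz0 hz1
        have e1 : z i = true := hz1.1
        have e2 : z i = false := hz0.1
        rw [e1] at e2
        exact Bool.noConfusion e2)
      (by -- hS2
        intro i
        set w := (i.val + (n - k)) % n with hw
        have hwn : w < n := Nat.mod_lt _ hn0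
        have hj1 : w / (d + 1) < m :=
          (Nat.div_lt_iff_lt_mul hd0).mpr (by rw [mul_comm, ← hm]; exact hwn)
        have hj2 : (w / (d + 1) + 1) % m < m := Nat.mod_lt _ hm0
        have hsub : ((insert i ((cycPow n k).neighborFinset i)).image cm)
            ⊆ {⟨w / (d + 1), hj1⟩, ⟨(w / (d + 1) + 1) % m, hj2⟩} := by
          intro j hj
          obtain ⟨v, hv, rfl⟩ := Finset.mem_image.mp hj
          obtain ⟨s, hs, hval⟩ := cycPow_param hd hkn hv
          have hval' : v.val = (w + s) % n := by
            rw [hw, Nat.mod_add_mod]; exact hval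
          have hdc := div_claim hm hwn hs (by omega)
          rw [← hval'] at hdc
          rcases hdc with h | h
          · exact Finset.mem_insert.mpr (Or.inl (Fin.ext (by rw [hcm v, h])))
          · exact Finset.mem_insert.mpr
              (Or.inr (Finset.mem_singleton.mpr (Fin.ext (by rw [hcm v, h]))))
        exact (Finset.card_le_card hsub).trans
          ((Finset.card_insert_le _ _).trans (by simp)))
      (3 * d + 2)
      (by -- hcount
        intro i
        set a := (i.val + (n - k)) % n - (i.val + (n - k)) % n % (d + 1) with ha
        refine ⟨(Finset.range (3 * d + 2)).image
            (fun r => (⟨(a + (n - k) + r) % n, Nat.mod_lt _ hn0⟩ : Fin n)),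
          le_trans Finset.card_image_le (le_of_eq (Finset.card_range _)), ?_⟩
        intro i' hnd
        obtain ⟨j0, hj0i, hj0i'⟩ := Finset.not_disjoint_iff.mp hnd
        obtain ⟨v, hv, hcv⟩ := Finset.mem_image.mp hj0i
        obtain ⟨v', hv', hcv'⟩ := Finset.mem_image.mp hj0i'
        obtain ⟨s, hs, hval⟩ := cycPow_param hd hkn hv
        obtain ⟨s', hs', hval'⟩ := cycPow_param hd hkn hv'
        have hdiv : v.val / (d + 1) = v'.val / (d + 1) := by
          rw [← hcm v, ← hcm v', hcv, hcv']
        obtain ⟨r, hr, heq⟩ := key_congr hd hm hn i.val i'.val v.val v'.val s s'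
          i'.isLt hs hs' hval hval' hdiv
        refine Finset.mem_image.mpr ⟨r, Finset.mem_range.mpr hr, ?_⟩
        exact Fin.ext heq.symm)
  calc clusterVar p cm (fullExp (cycPow n k) true) (fullExp (cycPow n k) false)
        (fun i z => Y1 i * (if z ∈ fullExp (cycPow n k) true i then 1 else 0))
      ≤ YM ^ 2 * ((p ^ 2)⁻¹ - 1) * ((3 * d + 2 : ℕ) : ℝ) / (Fintype.card (Fin n)) :=
        hfinal
    _ = YM ^ 2 * ((p ^ 2)⁻¹ - 1) * (3 * (d : ℝ) + 2) / (n : ℝ) := by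
        rw [Fintype.card_fin]
        push_cast
        ring

end
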